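/- Let d ≥ 1, let v_1, …, v_d be an orthonormal basis of ℂ^d, let λ_1, …, λ_d ≥ 0, ψ = Σ_j √λ_j · (v_j ⊗ v_j) ∈ ℂ^d ⊗ ℂ^d, ρ = Σ_j λ_j v_j v_j†, and r = Σ_j √λ_j v_j v_j†. For i = 1, 2 let s_i be a positive semidefinite d×d matrix, A_i = s_i², and U_i a unitary d×d matrix such that U_i s_i r is positive semidefinite. Let γ_i = ‖((U_i s_i) ⊗ I_d)ψ‖₂ and assume γ_1, γ_2 > 0. Then ‖ γ_1^{-1}((U_1 s_1) ⊗ I_d)ψ − γ_2^{-1}((U_2 s_2) ⊗ I_d)ψ ‖₂² ≤ ‖ γ_1^{-2} r A_1 r − γ_2^{-2} r A_2 r ‖₁, where ‖M‖₁ denotes the trace norm of the Hermitian matrix M (the sum of the absolute values of its eigenvalues). -/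

import Mathlib

open scoped ComplexOrder

open Matrix Kronecker

namespace Stmt10Aux

variable {n : Type*} [Fintype n] [DecidableEq n]

lemma psd_diag (M : Matrix n n ℂ) (hM : M.PosSemidef) (i : n) :
    0 ≤ (M i i).re ∧ (M i i).im = 0 := by
  have h := hM.dotProduct_mulVec_nonneg (Pi.single i 1)
  have he : star (Pi.single i 1 : n → ℂ) ⬝ᵥ (M *ᵥ Pi.single i 1) = M i i := by
    simp [dotProduct, mulVec, Pi.single_apply, Finset.mul_sum]
  rw [he] at h
  exact ⟨(Complex.nonneg_iff.mp h).1, ((Complex.nonneg_iff.mp h).2).symm⟩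

/-- pinching: sum of abs of diagonal entries of a conjugated Hermitian matrix
is at most the sum of abs of eigenvalues -/
lemma pinching (H : Matrix n n ℂ) (hH : H.IsHermitian) (W : Matrix n n ℂ)
    (hW : W ∈ Matrix.unitaryGroup n ℂ) :
    ∑ i, ‖(star W * H * W) i i‖ ≤ ∑ j, |hH.eigenvalues j| := by
  set V := (hH.eigenvectorUnitary : Matrix n n ℂ) with hV
  set C := star W * V with hCdef
  have hVu : V ∈ Matrix.unitaryGroup n ℂ := hH.eigenvectorUnitary.2
  have hCu : C ∈ Matrix.unitaryGroup n ℂ :=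
    mul_mem (Unitary.star_mem hW) hVu
  have hdiag : star W * H * W = C * diagonal (Complex.ofReal ∘ hH.eigenvalues) * star C := by
    conv_lhs => rw [hH.spectral_theorem, Unitary.conjStarAlgAut_apply]
    simp only [hCdef, Matrix.star_mul, star_star, Matrix.mul_assoc]
    rfl
  have hentry : ∀ i, (star W * H * W) i i
      = ∑ j, (hH.eigenvalues j : ℂ) * (C i j * star (C i j)) := by
    intro i
    rw [hdiag]
    simp [Matrix.mul_apply, Matrix.diagonal, Finset.sum_mul, conjTranspose_apply]
    ring_nf
    apply Finset.sum_congr rfl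
    intro j _
    ring
  have habs : ∀ i, ‖(star W * H * W) i i‖
      ≤ ∑ j, |hH.eigenvalues j| * ‖C i j‖ ^ 2 := by
    intro i
    rw [hentry i]
    refine le_trans (norm_sum_le _ _) ?_
    apply Finset.sum_le_sum
    intro j _
    rw [norm_mul, norm_mul]
    simp [sq]
  have hcol : ∀ j, ∑ i, ‖C i j‖ ^ 2 = 1 := by
    intro j
    have h1 : (star C * C) j j = 1 := by
      rw [(Matrix.mem_unitaryGroup_iff').mp hCu]
      simp
    have h2 : (star C * C) j j = ∑ i, (‖C i j‖ ^ 2 : ℝ) := by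
      rw [Matrix.mul_apply, Complex.ofReal_sum]
      apply Finset.sum_congr rfl
      intro i _
      simp only [Matrix.star_apply, RCLike.star_def]
      rw [mul_comm, Complex.mul_conj, ← Complex.sq_norm]
    rw [h2] at h1
    exact_mod_cast h1
  calc ∑ i, ‖(star W * H * W) i i‖
      ≤ ∑ i, ∑ j, |hH.eigenvalues j| * ‖C i j‖ ^ 2 :=
        Finset.sum_le_sum fun i _ => habs i
    _ = ∑ j, |hH.eigenvalues j| * ∑ i, ‖C i j‖ ^ 2 := by
        rw [Finset.sum_comm]
        simp [Finset.mul_sum]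
    _ = ∑ j, |hH.eigenvalues j| := by simp [hcol]

lemma eig_congr {A B : Matrix n n ℂ} (h : A = B) (hA : A.IsHermitian) (hB : B.IsHermitian) :
    ∑ j, |hA.eigenvalues j| = ∑ j, |hB.eigenvalues j| := by
  subst h
  rfl

lemma powers_stormer (P Q : Matrix n n ℂ) (hP : P.PosSemidef) (hQ : Q.PosSemidef)
    (hH : (P * P - Q * Q).IsHermitian) :
    (trace ((P - Q) * (P - Q))).re ≤ ∑ j, |hH.eigenvalues j| := by
  have hS : (P - Q).IsHermitian := hP.1.sub hQ.1
  set W := (hS.eigenvectorUnitary : Matrix n n ℂ) with hWdef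
  have hWu : W ∈ Matrix.unitaryGroup n ℂ := hS.eigenvectorUnitary.2
  have hWW : W * star W = 1 := Matrix.mem_unitaryGroup_iff.mp hWu
  have hWW' : star W * W = 1 := Matrix.mem_unitaryGroup_iff'.mp hWu
  have hDS : star W * (P - Q) * W = diagonal (Complex.ofReal ∘ hS.eigenvalues) :=
    by
      have h := hS.conjStarAlgAut_star_eigenvectorUnitary
      simp only [Unitary.conjStarAlgAut_apply, Unitary.coe_star, star_star] at h
      exact h
  set T := star W * (P + Q) * W with hTdef
  -- conjugation identity
  have hconj : ∀ X Y : Matrix n n ℂ,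
      (star W * X * W) * (star W * Y * W) = star W * (X * Y) * W := by
    intro X Y
    calc (star W * X * W) * (star W * Y * W)
        = star W * X * (W * star W) * Y * W := by
          simp only [Matrix.mul_assoc]
      _ = star W * (X * Y) * W := by rw [hWW]; simp only [Matrix.mul_one, Matrix.mul_assoc]
  -- trace of square
  have htr : (trace ((P - Q) * (P - Q))).re = ∑ i, hS.eigenvalues i ^ 2 := by
    have h1 : star W * ((P - Q) * (P - Q)) * W
        = diagonal (Complex.ofReal ∘ hS.eigenvalues) * diagonal (Complex.ofReal ∘ hS.eigenvalues) := by
      rw [← hconj, hDS]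
    have h2 : trace (star W * ((P - Q) * (P - Q)) * W) = trace ((P - Q) * (P - Q)) := by
      rw [Matrix.trace_mul_comm, ← Matrix.mul_assoc, hWW, Matrix.one_mul]
    rw [← h2, h1, Matrix.diagonal_mul_diagonal, Matrix.trace_diagonal]
    simp [Complex.ofReal_sum, ← Complex.ofReal_mul, sq]
  -- psd facts
  have hTm2Q : T - diagonal (Complex.ofReal ∘ hS.eigenvalues) = star W * (Q + Q) * W := by
    rw [← hDS, hTdef]
    noncomm_ring
  have hTp2P : T + diagonal (Complex.ofReal ∘ hS.eigenvalues) = star W * (P + P) * W := by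
    rw [← hDS, hTdef]
    noncomm_ring
  have hQQ : (star W * (Q + Q) * W).PosSemidef := by
    rw [Matrix.star_eq_conjTranspose]
    exact (hQ.add hQ).conjTranspose_mul_mul_same W
  have hPP : (star W * (P + P) * W).PosSemidef := by
    rw [Matrix.star_eq_conjTranspose]
    exact (hP.add hP).conjTranspose_mul_mul_same W
  -- diagonal entries of T
  have hTi : ∀ i, (T i i).im = 0 ∧ |hS.eigenvalues i| ≤ (T i i).re := by
    intro i
    have h1 := psd_diag _ hQQ i
    have h2 := psd_diag _ hPP i
    rw [← hTm2Q] at h1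
    rw [← hTp2P] at h2
    simp only [Matrix.sub_apply, Matrix.add_apply, Matrix.diagonal_apply_eq,
      Complex.sub_re, Complex.sub_im, Complex.add_re, Complex.add_im,
      Complex.ofReal_re, Complex.ofReal_im, Function.comp_apply] at h1 h2
    constructor
    · linarith [h1.2, h2.2]
    · rw [abs_le]
      constructor <;> linarith [h1.1, h2.1]
  -- entry identity for G
  have hGentry : ∀ i, (star W * (P * P - Q * Q) * W) i i
      = (hS.eigenvalues i : ℂ) * T i i := by
    intro i
    have key : star W * (P * P - Q * Q) * W + star W * (P * P - Q * Q) * W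
        = diagonal (Complex.ofReal ∘ hS.eigenvalues) * T
          + T * diagonal (Complex.ofReal ∘ hS.eigenvalues) := by
      rw [← hDS, hTdef, hconj, hconj]
      noncomm_ring
    have key2 := congrArg (fun M : Matrix n n ℂ => M i i) key
    simp only [Matrix.add_apply, Matrix.diagonal_mul, Matrix.mul_diagonal,
      Function.comp_apply] at key2
    have : (star W * (P * P - Q * Q) * W) i i + (star W * (P * P - Q * Q) * W) i i
        = (hS.eigenvalues i : ℂ) * T i i + (hS.eigenvalues i : ℂ) * T i i := by
      rw [key2]; ring
    linear_combination this / 2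
  -- per-entry lower bound
  have hlow : ∀ i, hS.eigenvalues i ^ 2
      ≤ ‖(star W * (P * P - Q * Q) * W) i i‖ := by
    intro i
    rw [hGentry i]
    rw [norm_mul]
    have ht := hTi i
    have habsT : ‖T i i‖ = (T i i).re := by
      have hre : T i i = ((T i i).re : ℂ) := Complex.ext (by simp) (by simp [ht.1])
      conv_lhs => rw [hre]
      rw [Complex.norm_real, Real.norm_eq_abs, abs_of_nonneg (le_trans (abs_nonneg _) ht.2)]
    rw [habsT, Complex.norm_real, Real.norm_eq_abs]
    have h2 : hS.eigenvalues i ^ 2 = |hS.eigenvalues i| * |hS.eigenvalues i| := by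
      rw [← sq_abs]; ring
    rw [h2]
    exact mul_le_mul_of_nonneg_left ht.2 (abs_nonneg _)
  calc (trace ((P - Q) * (P - Q))).re
      = ∑ i, hS.eigenvalues i ^ 2 := htr
    _ ≤ ∑ i, ‖(star W * (P * P - Q * Q) * W) i i‖ :=
        Finset.sum_le_sum fun i _ => hlow i
    _ ≤ ∑ j, |hH.eigenvalues j| := pinching _ hH W hWu

end Stmt10Aux

open Stmt10Aux

/-- For a symmetric pure state `ψ = Σ_j √λ_j (v_j ⊗ v_j)`, positive semidefinite `s_i`
with `A_i = s_i²`, unitaries `U_i` making `U_i s_i r` positive semidefinite, and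
normalizations `γ_i = ‖((U_i s_i) ⊗ I)ψ‖₂ > 0`:
`‖γ₁⁻¹((U₁s₁)⊗I)ψ − γ₂⁻¹((U₂s₂)⊗I)ψ‖₂² ≤ ‖γ₁⁻² r A₁ r − γ₂⁻² r A₂ r‖₁`. -/
theorem stmt10 (d : ℕ) (hd : 1 ≤ d) (v : Fin d → Fin d → ℂ)
    (hv : ∀ j k, star (v j) ⬝ᵥ v k = if j = k then 1 else 0)
    (lam : Fin d → ℝ) (hlam : ∀ j, 0 ≤ lam j)
    (ψ : Fin d × Fin d → ℂ)
    (hψ : ψ = fun p => ∑ j, (Real.sqrt (lam j) : ℂ) * v j p.1 * v j p.2)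
    (ρ r : Matrix (Fin d) (Fin d) ℂ)
    (hρ : ρ = ∑ j, (lam j : ℂ) • Matrix.vecMulVec (v j) (star (v j)))
    (hr : r = ∑ j, (Real.sqrt (lam j) : ℂ) • Matrix.vecMulVec (v j) (star (v j)))
    (s₁ s₂ : Matrix (Fin d) (Fin d) ℂ) (hs₁ : s₁.PosSemidef) (hs₂ : s₂.PosSemidef)
    (A₁ A₂ : Matrix (Fin d) (Fin d) ℂ) (hA₁ : A₁ = s₁ * s₁) (hA₂ : A₂ = s₂ * s₂)
    (U₁ U₂ : Matrix (Fin d) (Fin d) ℂ)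
    (hU₁ : U₁ ∈ Matrix.unitaryGroup (Fin d) ℂ)
    (hU₂ : U₂ ∈ Matrix.unitaryGroup (Fin d) ℂ)
    (hp₁ : (U₁ * s₁ * r).PosSemidef) (hp₂ : (U₂ * s₂ * r).PosSemidef)
    (γ₁ γ₂ : ℝ)
    (hγ₁ : γ₁ = Real.sqrt (∑ p, ‖(((U₁ * s₁) ⊗ₖ (1 : Matrix (Fin d) (Fin d) ℂ)).mulVec ψ) p‖ ^ 2))
    (hγ₂ : γ₂ = Real.sqrt (∑ p, ‖(((U₂ * s₂) ⊗ₖ (1 : Matrix (Fin d) (Fin d) ℂ)).mulVec ψ) p‖ ^ 2))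
    (hγ₁pos : 0 < γ₁) (hγ₂pos : 0 < γ₂)
    (T : Matrix (Fin d) (Fin d) ℂ)
    (hT : T = ((γ₁ : ℂ) ^ 2)⁻¹ • (r * A₁ * r) - ((γ₂ : ℂ) ^ 2)⁻¹ • (r * A₂ * r))
    (hTH : T.IsHermitian) :
    ∑ p, ‖(γ₁ : ℂ)⁻¹ * (((U₁ * s₁) ⊗ₖ (1 : Matrix (Fin d) (Fin d) ℂ)).mulVec ψ) p -
          (γ₂ : ℂ)⁻¹ * (((U₂ * s₂) ⊗ₖ (1 : Matrix (Fin d) (Fin d) ℂ)).mulVec ψ) p‖ ^ 2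
      ≤ ∑ j, |hTH.eigenvalues j| := by
  classical
  -- pointwise formula for the action of M ⊗ₖ 1 on ψ
  have hf : ∀ (M : Matrix (Fin d) (Fin d) ℂ) (p : Fin d × Fin d),
      ((M ⊗ₖ (1 : Matrix (Fin d) (Fin d) ℂ)).mulVec ψ) p
        = ∑ j, (Real.sqrt (lam j) : ℂ) * ((M *ᵥ v j) p.1 * v j p.2) := by
    intro M p
    have step1 : ((M ⊗ₖ (1 : Matrix (Fin d) (Fin d) ℂ)).mulVec ψ) p
        = ∑ c, M p.1 c * ψ (c, p.2) := by
      rw [Matrix.mulVec, dotProduct, Fintype.sum_prod_type]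
      apply Finset.sum_congr rfl
      intro c _
      simp only [kroneckerMap_apply, Matrix.one_apply, mul_ite, mul_one, mul_zero, ite_mul,
        zero_mul]
      rw [Finset.sum_ite_eq]
      simp
    rw [step1, hψ]
    simp only [Finset.mul_sum]
    rw [Finset.sum_comm]
    apply Finset.sum_congr rfl
    intro j _
    rw [Matrix.mulVec, dotProduct, Finset.sum_mul, Finset.mul_sum]
    apply Finset.sum_congr rfl
    intro c _
    ring
  -- dot products of such vectors
  have hgg : ∀ (j k : Fin d) (M N : Matrix (Fin d) (Fin d) ℂ),
      star (fun p : Fin d × Fin d => (M *ᵥ v j) p.1 * v j p.2)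
        ⬝ᵥ (fun p : Fin d × Fin d => (N *ᵥ v k) p.1 * v k p.2)
      = (star (M *ᵥ v j) ⬝ᵥ (N *ᵥ v k)) * (star (v j) ⬝ᵥ v k) := by
    intro j k M N
    simp only [dotProduct, Pi.star_apply, RCLike.star_def, _root_.map_mul]
    rw [Fintype.sum_prod_type, Finset.sum_mul_sum]
    apply Finset.sum_congr rfl; intro a _
    apply Finset.sum_congr rfl; intro b _
    ring
  have hfg : ∀ (M : Matrix (Fin d) (Fin d) ℂ),
      ((M ⊗ₖ (1 : Matrix (Fin d) (Fin d) ℂ)).mulVec ψ)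
        = ∑ j, (Real.sqrt (lam j) : ℂ) • (fun p : Fin d × Fin d => (M *ᵥ v j) p.1 * v j p.2) := by
    intro M
    funext p
    rw [hf M p, Finset.sum_apply]
    apply Finset.sum_congr rfl
    intro j _
    simp
  have hdot : ∀ (M N : Matrix (Fin d) (Fin d) ℂ),
      star ((M ⊗ₖ (1 : Matrix (Fin d) (Fin d) ℂ)).mulVec ψ)
        ⬝ᵥ ((N ⊗ₖ (1 : Matrix (Fin d) (Fin d) ℂ)).mulVec ψ)
      = ∑ j, (lam j : ℂ) * (star (M *ᵥ v j) ⬝ᵥ (N *ᵥ v j)) := by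
    have hbil : ∀ (x y : Fin d → (Fin d × Fin d → ℂ)),
        star (∑ j, x j) ⬝ᵥ (∑ k, y k) = ∑ j, ∑ k, star (x j) ⬝ᵥ y k := by
      intro x y
      simp only [dotProduct, Pi.star_apply, Finset.sum_apply, star_sum, Finset.sum_mul_sum]
      rw [Finset.sum_comm]
      apply Finset.sum_congr rfl; intro j _
      rw [Finset.sum_comm]
    intro M N
    rw [hfg M, hfg N, hbil]
    apply Finset.sum_congr rfl
    intro j _
    simp only [star_smul, smul_dotProduct, dotProduct_smul, RCLike.star_def,
      Complex.conj_ofReal, smul_eq_mul, hgg, hv]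
    simp only [mul_ite, mul_one, mul_zero, Finset.sum_ite_eq, Finset.mem_univ, if_true]
    rw [← mul_assoc, ← Complex.ofReal_mul, Real.mul_self_sqrt (hlam j)]
  -- r is Hermitian and r * r = ρ
  have hrH : rᴴ = r := by
    rw [hr]
    ext a b
    simp only [conjTranspose_apply, Matrix.sum_apply, Matrix.smul_apply, vecMulVec_apply,
      Pi.star_apply, smul_eq_mul, star_sum, star_mul', RCLike.star_def, _root_.map_mul,
      map_sum, Complex.conj_ofReal, Complex.conj_conj]
    apply Finset.sum_congr rfl
    intro j _
    ring
  have hrr : r * r = ρ := by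
    rw [hr, hρ]
    ext a b
    rw [Matrix.mul_apply]
    simp only [Matrix.sum_apply, Matrix.smul_apply, vecMulVec_apply, Pi.star_apply,
      smul_eq_mul, RCLike.star_def]
    simp only [Finset.sum_mul_sum]
    rw [Finset.sum_comm]
    apply Finset.sum_congr rfl; intro j _
    rw [Finset.sum_comm]
    have key : ∀ k : Fin d,
        ∑ c, ((Real.sqrt (lam j) : ℂ) * (v j a * (starRingEnd ℂ) (v j c)))
          * ((Real.sqrt (lam k) : ℂ) * (v k c * (starRingEnd ℂ) (v k b)))
        = ((Real.sqrt (lam j) : ℂ) * (Real.sqrt (lam k) : ℂ))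
            * ((v j a * (starRingEnd ℂ) (v k b)) * (star (v j) ⬝ᵥ v k)) := by
      intro k
      simp only [dotProduct, Pi.star_apply, RCLike.star_def]
      simp only [Finset.mul_sum]
      apply Finset.sum_congr rfl; intro c _
      ring
    calc ∑ k, ∑ c, ((Real.sqrt (lam j) : ℂ) * (v j a * (starRingEnd ℂ) (v j c)))
          * ((Real.sqrt (lam k) : ℂ) * (v k c * (starRingEnd ℂ) (v k b)))
        = ∑ k, ((Real.sqrt (lam j) : ℂ) * (Real.sqrt (lam k) : ℂ))
            * ((v j a * (starRingEnd ℂ) (v k b)) * (star (v j) ⬝ᵥ v k)) := by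
          exact Finset.sum_congr rfl fun k _ => key k
      _ = (lam j : ℂ) * (v j a * (starRingEnd ℂ) (v j b)) := by
          simp only [hv]
          simp only [mul_ite, mul_one, mul_zero, Finset.sum_ite_eq, Finset.mem_univ, if_true]
          rw [← Complex.ofReal_mul, Real.mul_self_sqrt (hlam j)]
  -- adjoint/trace identities
  have hinner : ∀ (M N : Matrix (Fin d) (Fin d) ℂ) (x : Fin d → ℂ),
      star (M *ᵥ x) ⬝ᵥ (N *ᵥ x) = star x ⬝ᵥ ((Mᴴ * N) *ᵥ x) := by
    intro M N x
    rw [Matrix.star_mulVec, ← Matrix.mulVec_mulVec, Matrix.dotProduct_mulVec,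
      Matrix.dotProduct_mulVec, Matrix.dotProduct_mulVec]
  have tvmv : ∀ (X : Matrix (Fin d) (Fin d) ℂ) (u w : Fin d → ℂ),
      trace (X * Matrix.vecMulVec u w) = w ⬝ᵥ (X *ᵥ u) := by
    intro X u w
    simp only [Matrix.trace, Matrix.diag, Matrix.mul_apply, vecMulVec_apply, dotProduct,
      Matrix.mulVec, Finset.mul_sum]
    apply Finset.sum_congr rfl; intro a _
    apply Finset.sum_congr rfl; intro c _
    ring
  have htrace : ∀ (M N : Matrix (Fin d) (Fin d) ℂ),
      trace ((M * r)ᴴ * (N * r))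
        = ∑ j, (lam j : ℂ) * (star (M *ᵥ v j) ⬝ᵥ (N *ᵥ v j)) := by
    intro M N
    have h1 : (M * r)ᴴ * (N * r) = rᴴ * ((Mᴴ * N) * r) := by
      rw [Matrix.conjTranspose_mul]
      noncomm_ring
    rw [h1, Matrix.trace_mul_comm, Matrix.mul_assoc, hrH, hrr, hρ, Matrix.mul_sum,
      Matrix.trace_sum]
    apply Finset.sum_congr rfl
    intro j _
    rw [Matrix.mul_smul, Matrix.trace_smul, tvmv, smul_eq_mul, hinner]
  have hnorm : ∀ (z : Fin d × Fin d → ℂ),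
      ∑ p, ‖z p‖ ^ 2 = (star z ⬝ᵥ z).re := by
    intro z
    rw [dotProduct, Complex.re_sum]
    apply Finset.sum_congr rfl
    intro p _
    rw [Pi.star_apply, RCLike.star_def, mul_comm, Complex.mul_conj, ← Complex.sq_norm]
    rw [Complex.ofReal_pow, ← Complex.ofReal_pow, Complex.ofReal_re]
  -- assemble
  set M₁ := U₁ * s₁ with hM₁
  set M₂ := U₂ * s₂ with hM₂
  set c₁ : ℂ := ((γ₁ : ℂ))⁻¹ with hc₁
  set c₂ : ℂ := ((γ₂ : ℂ))⁻¹ with hc₂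
  set E := c₁ • M₁ - c₂ • M₂ with hE
  have hEp : ∀ p, c₁ * ((M₁ ⊗ₖ (1 : Matrix (Fin d) (Fin d) ℂ)).mulVec ψ) p
        - c₂ * ((M₂ ⊗ₖ (1 : Matrix (Fin d) (Fin d) ℂ)).mulVec ψ) p
      = ((E ⊗ₖ (1 : Matrix (Fin d) (Fin d) ℂ)).mulVec ψ) p := by
    intro p
    rw [hf, hf, hf]
    rw [Finset.mul_sum, Finset.mul_sum, ← Finset.sum_sub_distrib]
    apply Finset.sum_congr rfl
    intro j _
    rw [hE]
    simp only [Matrix.sub_mulVec, Matrix.smul_mulVec, Pi.sub_apply, Pi.smul_apply,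
      smul_eq_mul]
    ring
  have hLHS : ∑ p, ‖c₁ * ((M₁ ⊗ₖ (1 : Matrix (Fin d) (Fin d) ℂ)).mulVec ψ) p
        - c₂ * ((M₂ ⊗ₖ (1 : Matrix (Fin d) (Fin d) ℂ)).mulVec ψ) p‖ ^ 2
      = (trace ((E * r)ᴴ * (E * r))).re := by
    rw [Finset.sum_congr rfl fun p _ => by rw [hEp p]]
    rw [hnorm]
    rw [congrArg Complex.re ((hdot E E).trans (htrace E E).symm)]
  set P := c₁ • (M₁ * r) with hPdef
  set Q := c₂ • (M₂ * r) with hQdef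
  have hEr : E * r = P - Q := by
    rw [hE, Matrix.sub_mul, Matrix.smul_mul, Matrix.smul_mul]
  have hc₁0 : (0:ℂ) ≤ c₁ := by
    rw [hc₁, ← Complex.ofReal_inv]
    exact Complex.zero_le_real.mpr (by positivity)
  have hc₂0 : (0:ℂ) ≤ c₂ := by
    rw [hc₂, ← Complex.ofReal_inv]
    exact Complex.zero_le_real.mpr (by positivity)
  have hsmulpsd : ∀ (c : ℂ), 0 ≤ c → ∀ (B : Matrix (Fin d) (Fin d) ℂ),
      B.PosSemidef → (c • B).PosSemidef := by
    intro c hc B hB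
    refine Matrix.PosSemidef.of_dotProduct_mulVec_nonneg ?_ ?_
    · have hcr : star c = c := by
        rw [RCLike.star_def, Complex.conj_eq_iff_im]
        exact (Complex.nonneg_iff.mp hc).2.symm
      show (c • B)ᴴ = c • B
      rw [Matrix.conjTranspose_smul, hcr, hB.1]
    · intro x
      rw [Matrix.smul_mulVec, dotProduct_smul, smul_eq_mul]
      exact mul_nonneg hc (hB.dotProduct_mulVec_nonneg x)
  have hPpsd : P.PosSemidef := hsmulpsd c₁ hc₁0 _ hp₁
  have hQpsd : Q.PosSemidef := hsmulpsd c₂ hc₂0 _ hp₂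
  have hHerm : (P - Q)ᴴ = P - Q := (hPpsd.1.sub hQpsd.1)
  have hUU₁ : U₁ᴴ * U₁ = 1 := by
    rw [← Matrix.star_eq_conjTranspose]
    exact Matrix.mem_unitaryGroup_iff'.mp hU₁
  have hUU₂ : U₂ᴴ * U₂ = 1 := by
    rw [← Matrix.star_eq_conjTranspose]
    exact Matrix.mem_unitaryGroup_iff'.mp hU₂
  have hB₁ : (M₁ * r)ᴴ * (M₁ * r) = r * A₁ * r := by
    rw [Matrix.conjTranspose_mul, hrH, hM₁, Matrix.conjTranspose_mul, hA₁]
    calc r * (s₁ᴴ * U₁ᴴ) * (U₁ * s₁ * r)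
        = r * s₁ᴴ * (U₁ᴴ * U₁) * (s₁ * r) := by noncomm_ring
      _ = r * (s₁ * s₁) * r := by rw [hUU₁, hs₁.1.eq]; noncomm_ring
  have hB₂ : (M₂ * r)ᴴ * (M₂ * r) = r * A₂ * r := by
    rw [Matrix.conjTranspose_mul, hrH, hM₂, Matrix.conjTranspose_mul, hA₂]
    calc r * (s₂ᴴ * U₂ᴴ) * (U₂ * s₂ * r)
        = r * s₂ᴴ * (U₂ᴴ * U₂) * (s₂ * r) := by noncomm_ring
      _ = r * (s₂ * s₂) * r := by rw [hUU₂, hs₂.1.eq]; noncomm_ring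
  have hPP : P * P = ((γ₁:ℂ)^2)⁻¹ • (r * A₁ * r) := by
    have h2 : (M₁ * r) * (M₁ * r) = r * A₁ * r := by
      conv_lhs => rw [show (M₁ * r) * (M₁ * r) = (M₁ * r)ᴴ * (M₁ * r) by rw [hp₁.1]]
      rw [hB₁]
    rw [hPdef, Matrix.smul_mul, Matrix.mul_smul, smul_smul, h2, hc₁, ← mul_inv, ← sq]
  have hQQ : Q * Q = ((γ₂:ℂ)^2)⁻¹ • (r * A₂ * r) := by
    have h2 : (M₂ * r) * (M₂ * r) = r * A₂ * r := by
      conv_lhs => rw [show (M₂ * r) * (M₂ * r) = (M₂ * r)ᴴ * (M₂ * r) by rw [hp₂.1]]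
      rw [hB₂]
    rw [hQdef, Matrix.smul_mul, Matrix.mul_smul, smul_smul, h2, hc₂, ← mul_inv, ← sq]
  have hTPQ : T = P * P - Q * Q := by rw [hT, hPP, hQQ]
  have hH' : (P * P - Q * Q).IsHermitian := hTPQ ▸ hTH
  calc ∑ p, ‖c₁ * ((M₁ ⊗ₖ (1 : Matrix (Fin d) (Fin d) ℂ)).mulVec ψ) p
        - c₂ * ((M₂ ⊗ₖ (1 : Matrix (Fin d) (Fin d) ℂ)).mulVec ψ) p‖ ^ 2
      = (trace ((E * r)ᴴ * (E * r))).re := hLHS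
    _ = (trace ((P - Q) * (P - Q))).re := by rw [hEr, hHerm]
    _ ≤ ∑ j, |hH'.eigenvalues j| := powers_stormer P Q hPpsd hQpsd hH'
    _ = ∑ j, |hTH.eigenvalues j| := (eig_congr hTPQ hTH hH').symm
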